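/- For all x, y ∈ B², j*_{B²}(x,y) ≤ w_{B²}(x,y) ≤ √2·j*_{B²}(x,y), with equality in the first inequality when x, y lie on the same ray from the origin; moreover the constant √2 is sharp: for x = 1−k, y = (1−k)e^{2ki}, the quotient w_{B²}(x,y)/j*_{B²}(x,y) = ((1−k)sin k + k)/√(k² + (1−k²)sin²k) tends to √2 as k → 0⁺. -/

import Mathlib

open Metric Set

/-- `x̃ = x(2−|x|)/|x|`. -/
noncomputable def tilde (x : ℂ) : ℂ := (((2 - ‖x‖) / ‖x‖ : ℝ) : ℂ) * x

/-- The quasi-metric `w` of the unit disk. -/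
noncomputable def wB (x y : ℂ) : ℝ :=
  if x = 0 then ‖y‖ / (2 - ‖y‖)
  else if y = 0 then ‖x‖ / (2 - ‖x‖)
  else ‖x - y‖ / min (‖x - tilde y‖) (‖y - tilde x‖)

/-- The `j*` metric of the unit disk. -/
noncomputable def jB (x y : ℂ) : ℝ :=
  ‖x - y‖ /
    (‖x - y‖ + 2 * min (1 - ‖x‖) (1 - ‖y‖))

lemma abs_sub_real_smul_sq (c : ℝ) (x y : ℂ) :
    ‖x - (c:ℂ)*y‖ ^ 2
      = ‖x‖ ^ 2 + c^2 * ‖y‖ ^ 2 - 2*c*(x * (starRingEnd ℂ) y).re := by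
  rw [Complex.sq_norm, Complex.sq_norm, Complex.sq_norm]
  simp [Complex.normSq_apply, Complex.mul_re, Complex.mul_im]
  ring


lemma re_mul_conj_le (x y : ℂ) :
    (x * (starRingEnd ℂ) y).re ≤ ‖x‖ * ‖y‖ :=
  (Complex.re_le_norm _).trans (by rw [norm_mul, Complex.norm_conj])


lemma abs_sub_tilde_sq (x y : ℂ) (hy0 : y ≠ 0) :
    ‖y‖ * ‖x - tilde y‖ ^ 2
      = ‖y‖ * ‖x‖ ^ 2 + ‖y‖ * (2 - ‖y‖)^2
        - 2*(x * (starRingEnd ℂ) y).re*(2 - ‖y‖) := by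
  have hs : 0 < ‖y‖ := norm_pos_iff.mpr hy0
  rw [tilde, abs_sub_real_smul_sq]
  field_simp


lemma sub_tilde_self (y : ℂ) (hy0 : y ≠ 0) (hy : ‖y‖ ≤ 1) :
    ‖y - tilde y‖ = 2 - 2 * ‖y‖ := by
  have hs : 0 < ‖y‖ := norm_pos_iff.mpr hy0
  have : y - tilde y = (((2*‖y‖ - 2)/‖y‖ : ℝ) : ℂ) * y := by
    have hcs : ((‖y‖ : ℝ) : ℂ) ≠ 0 := by exact_mod_cast hs.ne'
    rw [tilde]; push_cast; field_simp; ring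
  rw [this, norm_mul, Complex.norm_real, Real.norm_eq_abs, abs_div, abs_of_nonpos (by linarith),
    abs_of_pos hs]
  field_simp
  ring


lemma abs_tilde (y : ℂ) (hy0 : y ≠ 0) (hy : ‖y‖ ≤ 1) :
    ‖tilde y‖ = 2 - ‖y‖ := by
  have hs : 0 < ‖y‖ := norm_pos_iff.mpr hy0
  rw [tilde, norm_mul, Complex.norm_real, Real.norm_eq_abs, abs_div, abs_of_nonneg (by linarith : (0:ℝ) ≤ 2 - ‖y‖), abs_of_pos hs]
  field_simp


lemma core0 (r s t a : ℝ) (hr : 0 ≤ r) (hrs : r ≤ s) (hs1 : s ≤ 1)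
    (haa : a^2 = r^2 + s^2 - 2*t) :
    s*(a + 2 - 2*s)^2 ≤ 2*(s*r^2 + s*(2-s)^2 - 2*t*(2-s)) := by
  have h43 : (0:ℝ) < 4 - 3*s := by linarith
  have hS : 0 ≤ s*(2-s)^2 - r^2*(4-3*s) := by
    nlinarith [mul_nonneg (hr.trans hrs) (sq_nonneg (1-s)),
      mul_nonneg h43.le (mul_nonneg (sub_nonneg.2 hrs) (by linarith : (0:ℝ) ≤ s + r))]
  nlinarith [sq_nonneg ((4-3*s)*a - 2*s*(1-s)), mul_nonneg (by linarith : (0:ℝ) ≤ 1-s) hS, haa, h43]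


lemma core1 (r s t a : ℝ) (hs : 0 ≤ s) (hsr : s ≤ r) (hr1 : r ≤ 1)
    (hars : r - s ≤ a) (haa : a^2 = r^2 + s^2 - 2*t) :
    s*(a + 2 - 2*r)^2 ≤ 2*(s*r^2 + s*(2-s)^2 - 2*t*(2-s)) := by
  have h43 : (0:ℝ) < 4 - 3*s := by linarith
  rcases le_total (2*s*(1-r)) ((4-3*s)*(r-s)) with h|h
  · have hf : 0 ≤ (4-3*s)*(a+r-s) - 4*s*(1-r) := by
      nlinarith [mul_nonneg h43.le (sub_nonneg.2 hars)]
    nlinarith [mul_nonneg (sub_nonneg.2 hars) hf, mul_nonneg hs (sq_nonneg (2-r-s)), haa]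
  · have hd : 2*s*(1-r) - (4-3*s)*(r-s) ≤ s*(2-r-s) := by
      nlinarith [mul_nonneg (sub_nonneg.2 hsr) (by linarith : (0:ℝ) ≤ 4-2*s)]
    have hd0 : 0 ≤ 2*s*(1-r) - (4-3*s)*(r-s) := by linarith
    have hd2 : (2*s*(1-r) - (4-3*s)*(r-s))^2 ≤ s*(4-3*s)*(2-r-s)^2 := by
      nlinarith [mul_self_le_mul_self hd0 hd, mul_nonneg hs (sq_nonneg (2-r-s)),
        mul_nonneg (mul_nonneg hs hs) (sq_nonneg (2-r-s)), sq_nonneg (2-r-s)]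
    nlinarith [sq_nonneg ((4-3*s)*a - 2*s*(1-r)), hd2, haa, h43]


lemma key_upper (x y : ℂ) (hx : ‖x‖ < 1) (hy : ‖y‖ < 1) (hy0 : y ≠ 0) :
    ‖x - y‖ + 2 * min (1 - ‖x‖) (1 - ‖y‖)
      ≤ Real.sqrt 2 * ‖x - tilde y‖ := by
  set r := ‖x‖ with hrdef
  set s := ‖y‖ with hsdef
  set a := ‖x - y‖ with hadef
  set t := (x * (starRingEnd ℂ) y).re with htdef
  set B := ‖x - tilde y‖ with hBdef
  have hr0 : 0 ≤ r := norm_nonneg x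
  have hs0 : 0 < s := norm_pos_iff.mpr hy0
  have ha0 : 0 ≤ a := norm_nonneg _
  have hB0 : 0 ≤ B := norm_nonneg _
  have htval : t = x.re*y.re + x.im*y.im := by
    rw [htdef]; simp [Complex.mul_re]
  have haa : a^2 = r^2 + s^2 - 2*t := by
    have h := abs_sub_real_smul_sq 1 x y
    rw [htval]; simpa using h
  have ht : t ≤ r*s := re_mul_conj_le x y
  have hB : s * B^2 = s*r^2 + s*(2-s)^2 - 2*t*(2-s) := abs_sub_tilde_sq x y hy0
  have key : s * (a + 2*min (1-r) (1-s))^2 ≤ s * (2*B^2) := by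
    rcases le_total r s with hc | hc
    · rw [min_eq_right (by linarith)]
      calc s * (a + 2*(1-s))^2 = s*(a + 2 - 2*s)^2 := by ring_nf
        _ ≤ 2*(s*r^2 + s*(2-s)^2 - 2*t*(2-s)) := core0 r s t a hr0 hc hy.le haa
        _ = s * (2*B^2) := by rw [← hB]; ring
    · rw [min_eq_left (by linarith)]
      have hars : r - s ≤ a := by
        have h1 : (r-s)^2 ≤ a^2 := by nlinarith [ht]
        calc r - s ≤ |r - s| := le_abs_self _
          _ = Real.sqrt ((r-s)^2) := (Real.sqrt_sq_eq_abs _).symm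
          _ ≤ Real.sqrt (a^2) := Real.sqrt_le_sqrt h1
          _ = a := Real.sqrt_sq ha0
      calc s * (a + 2*(1-r))^2 = s*(a + 2 - 2*r)^2 := by ring_nf
        _ ≤ 2*(s*r^2 + s*(2-s)^2 - 2*t*(2-s)) := core1 r s t a hs0.le hc hx.le hars haa
        _ = s * (2*B^2) := by rw [← hB]; ring
  have key2 : (a + 2*min (1-r) (1-s))^2 ≤ 2*B^2 := le_of_mul_le_mul_left (by linarith) hs0
  have hD0 : 0 ≤ a + 2*min (1-r) (1-s) := by
    have : 0 ≤ min (1-r) (1-s) := le_min (by linarith) (by linarith)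
    linarith
  calc a + 2*min (1-r) (1-s) = Real.sqrt ((a + 2*min (1-r) (1-s))^2) := (Real.sqrt_sq hD0).symm
    _ ≤ Real.sqrt (2*B^2) := Real.sqrt_le_sqrt key2
    _ = Real.sqrt 2 * B := by rw [Real.sqrt_mul (by norm_num), Real.sqrt_sq hB0]


lemma key_lower (x y : ℂ) (hy : ‖y‖ < 1) (hy0 : y ≠ 0) :
    ‖x - tilde y‖ ≤ ‖x - y‖ + 2*(1 - ‖y‖) := by
  have h := norm_sub_le_norm_sub_add_norm_sub x y (tilde y)
  rw [sub_tilde_self y hy0 hy.le] at h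
  linarith


lemma tilde_pos_lower (x y : ℂ) (hx : ‖x‖ < 1) (hy : ‖y‖ < 1) (hy0 : y ≠ 0) :
    0 < ‖x - tilde y‖ := by
  have h : ‖tilde y‖ ≤ ‖tilde y - x‖ + ‖x‖ := by
    calc ‖tilde y‖ = ‖tilde y - x + x‖ := by ring_nf
      _ ≤ _ := norm_add_le _ _
  rw [abs_tilde y hy0 hy.le] at h
  have h2 : ‖tilde y - x‖ = ‖x - tilde y‖ := norm_sub_rev _ _
  linarith [norm_pos_iff.mpr (show tilde y - x ≠ 0 by intro hh; rw [hh] at h; simp at h; linarith)]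


lemma jB_zero_left (y : ℂ) (hy : ‖y‖ < 1) : jB 0 y = wB 0 y := by
  have h0 : ‖0 - y‖ = ‖y‖ := by rw [norm_sub_rev, sub_zero]
  have hy0 : (0:ℝ) ≤ ‖y‖ := norm_nonneg y
  rw [jB, wB, if_pos rfl, h0, norm_zero,
    min_eq_right (by linarith : 1 - ‖y‖ ≤ 1 - 0)]
  congr 1
  ring


lemma jB_comm (x y : ℂ) : jB x y = jB y x := by
  rw [jB, jB, norm_sub_rev, min_comm]


lemma wB_zero_right (x : ℂ) (hx : ‖x‖ < 1) : jB x 0 = wB x 0 := by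
  by_cases hx0 : x = 0
  · subst hx0; exact jB_zero_left 0 (by simpa using hx)
  · rw [jB_comm, jB_zero_left x hx, wB, wB, if_neg hx0, if_pos rfl, if_pos rfl, if_neg hx0]


lemma part1_core (x y : ℂ) (hx : ‖x‖ < 1) (hy : ‖y‖ < 1)
    (hx0 : x ≠ 0) (hy0 : y ≠ 0) :
    jB x y ≤ wB x y ∧ wB x y ≤ Real.sqrt 2 * jB x y := by
  set r := ‖x‖ with hrdef
  set s := ‖y‖ with hsdef
  set a := ‖x - y‖ with hadef
  set B1 := ‖x - tilde y‖ with hB1def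
  set B2 := ‖y - tilde x‖ with hB2def
  have ha0 : 0 ≤ a := norm_nonneg _
  have hr0 : 0 ≤ r := norm_nonneg _
  have hs0 : 0 ≤ s := norm_nonneg _
  have hayx : ‖y - x‖ = a := norm_sub_rev y x
  have hB1pos : 0 < B1 := tilde_pos_lower x y hx hy hy0
  have hB2pos : 0 < B2 := tilde_pos_lower y x hy hx hx0
  have hm0 : 0 < min (1 - r) (1 - s) := lt_min (by linarith) (by linarith)
  have hD : 0 < a + 2 * min (1 - r) (1 - s) := by linarith
  have hM : 0 < min B1 B2 := lt_min hB1pos hB2pos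
  have hwB : wB x y = a / min B1 B2 := by rw [wB, if_neg hx0, if_neg hy0]
  have hMD : min B1 B2 ≤ a + 2 * min (1 - r) (1 - s) := by
    rcases le_total r s with hc | hc
    · rw [min_eq_right (by linarith : 1 - s ≤ 1 - r)]
      calc min B1 B2 ≤ B1 := min_le_left _ _
        _ ≤ a + 2*(1 - s) := key_lower x y hy hy0
    · rw [min_eq_left (by linarith : 1 - r ≤ 1 - s)]
      calc min B1 B2 ≤ B2 := min_le_right _ _
        _ ≤ a + 2*(1 - r) := by
            have h := key_lower y x hx hx0
            rw [hayx] at h; exact h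
  have hDM : a + 2 * min (1 - r) (1 - s) ≤ Real.sqrt 2 * min B1 B2 := by
    have h1 := key_upper x y hx hy hy0
    have h2 := key_upper y x hy hx hx0
    rw [hayx, min_comm (1-s) (1-r)] at h2
    rcases le_total B1 B2 with hc | hc
    · rw [min_eq_left hc]; exact h1
    · rw [min_eq_right hc]; exact h2
  constructor
  · rw [hwB, jB, ← hrdef, ← hsdef]
    rw [div_le_div_iff₀ hD hM]
    exact mul_le_mul_of_nonneg_left hMD ha0
  · rw [hwB, jB, ← hrdef, ← hsdef, mul_div_assoc' (Real.sqrt 2) a _,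
      div_le_div_iff₀ hM hD]
    calc a * (a + 2 * min (1 - r) (1 - s)) ≤ a * (Real.sqrt 2 * min B1 B2) :=
          mul_le_mul_of_nonneg_left hDM ha0
      _ = Real.sqrt 2 * a * min B1 B2 := by ring


lemma part2_core (x y : ℂ) (hx : ‖x‖ < 1) (hy : ‖y‖ < 1)
    (hx0 : x ≠ 0) (hy0 : y ≠ 0) (h : SameRay ℝ x y) :
    jB x y = wB x y := by
  obtain ⟨c₁, c₂, hc₁, hc₂, hxy⟩ := h.exists_pos hx0 hy0
  have hc : 0 < c₁ / c₂ := div_pos hc₁ hc₂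
  have hyx' : y = (c₁/c₂ : ℝ) • x := by
    rw [div_eq_mul_inv, mul_comm, mul_smul, hxy, inv_smul_smul₀ hc₂.ne']
  obtain ⟨c, hc0, hyx⟩ : ∃ c : ℝ, 0 < c ∧ y = (c : ℂ) * x :=
    ⟨c₁/c₂, hc, by rw [hyx', Complex.real_smul]⟩
  clear hxy hyx' hc₁ hc₂ hc
  set r := ‖x‖ with hrdef
  have hr0 : 0 < r := norm_pos_iff.mpr hx0
  have hrC : ((r : ℝ) : ℂ) ≠ 0 := by exact_mod_cast hr0.ne'
  have hs : ‖y‖ = c * r := by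
    rw [hyx, norm_mul, Complex.norm_real, Real.norm_eq_abs, abs_of_pos hc0]
  have hcr1 : c * r < 1 := by rw [← hs]; exact hy
  have ha : ‖x - y‖ = |1 - c| * r := by
    have : x - y = ((1 - c : ℝ) : ℂ) * x := by rw [hyx]; push_cast; ring
    rw [this, norm_mul, Complex.norm_real, Real.norm_eq_abs]
  have hB1 : ‖x - tilde y‖ = 2 - r - c*r := by
    have hcC : ((c : ℝ) : ℂ) ≠ 0 := by exact_mod_cast hc0.ne'
    have hcrC : ((c * r : ℝ) : ℂ) ≠ 0 := by
      push_cast; exact mul_ne_zero hcC hrC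
    have h1 : x - tilde y = ((1 - (2 - c*r)/r : ℝ) : ℂ) * x := by
      rw [tilde, hs, hyx]
      push_cast
      field_simp
    rw [h1, norm_mul, Complex.norm_real, Real.norm_eq_abs, abs_of_nonpos, ← hrdef]
    · field_simp
      ring
    · rw [sub_nonpos, le_div_iff₀ hr0]
      nlinarith
  have hB2 : ‖y - tilde x‖ = 2 - r - c*r := by
    have h1 : y - tilde x = ((c - (2 - r)/r : ℝ) : ℂ) * x := by
      rw [tilde, hyx, ← hrdef]
      push_cast
      ring
    rw [h1, norm_mul, Complex.norm_real, Real.norm_eq_abs, ← hrdef]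
    have h2 : |c - (2 - r)/r| = (2 - r - c*r)/r := by
      rw [abs_of_nonpos]
      · field_simp; ring
      · rw [sub_nonpos, le_div_iff₀ hr0]; nlinarith
    rw [h2]
    field_simp
  have hden : |1 - c| * r + 2 * min (1 - r) (1 - c*r) = 2 - r - c*r := by
    rcases le_total c 1 with hc1 | hc1
    · rw [abs_of_nonneg (by linarith), min_eq_left (by nlinarith)]
      ring
    · rw [abs_of_nonpos (by linarith), min_eq_right (by nlinarith)]
      ring
  rw [jB, wB, if_neg hx0, if_neg hy0, hs, ha, hB1, hB2, min_self, hden]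


lemma part3 (k : ℝ) (hk0 : 0 < k) (hk1 : k < 1) :
    wB ((1 - k : ℝ) : ℂ) (((1 - k : ℝ) : ℂ) * Complex.exp ((2 * k : ℝ) * Complex.I)) /
      jB ((1 - k : ℝ) : ℂ) (((1 - k : ℝ) : ℂ) * Complex.exp ((2 * k : ℝ) * Complex.I))
    = ((1 - k) * Real.sin k + k) / Real.sqrt (k ^ 2 + (1 - k ^ 2) * Real.sin k ^ 2) := by
  have hpi : k < Real.pi := by linarith [Real.pi_gt_three]
  have hsin : 0 < Real.sin k := Real.sin_pos_of_pos_of_lt_pi hk0 hpi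
  have h1k : (0:ℝ) < 1 - k := by linarith
  set e := Complex.exp ((2 * k : ℝ) * Complex.I) with hedef
  set x : ℂ := ((1 - k : ℝ) : ℂ) with hxdef
  set y : ℂ := x * e with hydef
  have hx0 : x ≠ 0 := by
    rw [hxdef]; exact_mod_cast h1k.ne'
  have hy0 : y ≠ 0 := mul_ne_zero hx0 (Complex.exp_ne_zero _)
  have here : e.re = Real.cos (2*k) := Complex.exp_ofReal_mul_I_re (2*k)
  have heim : e.im = Real.sin (2*k) := Complex.exp_ofReal_mul_I_im (2*k)
  have hcos : Real.cos (2*k) = 1 - 2 * Real.sin k ^ 2 := by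
    rw [Real.cos_two_mul]; linarith [Real.sin_sq_add_cos_sq k]
  have hsin2 : Real.sin (2*k) = 2 * Real.sin k * Real.cos k := Real.sin_two_mul k
  have hax : ‖x‖ = 1 - k := by
    rw [hxdef, Complex.norm_real, Real.norm_eq_abs, abs_of_pos h1k]
  have hay : ‖y‖ = 1 - k := by
    rw [hydef, norm_mul, hax, hedef, Complex.norm_exp_ofReal_mul_I, mul_one]
  have pyth := Real.sin_sq_add_cos_sq k
  set u : ℝ := k ^ 2 + (1 - k ^ 2) * Real.sin k ^ 2 with hudef
  have hu0 : 0 < u := by nlinarith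
  set S := Real.sqrt u with hSdef
  have hS0 : 0 < S := Real.sqrt_pos.2 hu0
  have ha : ‖x - y‖ = 2 * (1 - k) * Real.sin k := by
    rw [Complex.norm_def, Complex.normSq_apply]
    have hre : (x - y).re = (1-k) - (1-k) * Real.cos (2*k) := by
      simp [hydef, hxdef, Complex.mul_re, here, heim]
    have him : (x - y).im = -((1-k) * Real.sin (2*k)) := by
      simp [hydef, hxdef, Complex.mul_im, here, heim]
    rw [hre, him, show ((1-k) - (1-k) * Real.cos (2*k)) * ((1-k) - (1-k) * Real.cos (2*k))
        + -((1-k) * Real.sin (2*k)) * -((1-k) * Real.sin (2*k))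
        = (2 * (1 - k) * Real.sin k)^2 by rw [hcos, hsin2]; nlinarith [pyth]]
    exact Real.sqrt_sq (by positivity)
  have htily : tilde y = ((1 + k : ℝ) : ℂ) * e := by
    rw [tilde, hay, hydef, hxdef]
    push_cast
    have : ((1:ℂ) - k) ≠ 0 := by exact_mod_cast h1k.ne'
    field_simp
    ring
  have htilx : tilde x = ((1 + k : ℝ) : ℂ) := by
    rw [tilde, hax, hxdef]
    push_cast
    have : ((1:ℂ) - k) ≠ 0 := by exact_mod_cast h1k.ne'
    field_simp
    ring
  have habs : ∀ z : ℂ, z.re^2 + z.im^2 = 4*u → ‖z‖ = 2 * S := by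
    intro z hz
    rw [Complex.norm_def, Complex.normSq_apply,
      show z.re * z.re + z.im * z.im = z.re^2 + z.im^2 by ring, hz,
      show (4:ℝ) * u = (2*S)^2 by rw [hSdef, mul_pow, Real.sq_sqrt hu0.le]; norm_num]
    exact Real.sqrt_sq (by positivity)
  have hB1 : ‖x - tilde y‖ = 2 * S := by
    apply habs
    have hre : (x - tilde y).re = (1-k) - (1+k) * Real.cos (2*k) := by
      rw [htily, hxdef, Complex.sub_re, Complex.mul_re, Complex.ofReal_re,
        Complex.ofReal_im, Complex.ofReal_re, here, heim]
      ring
    have him : (x - tilde y).im = -((1+k) * Real.sin (2*k)) := by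
      rw [htily, hxdef, Complex.sub_im, Complex.mul_im, Complex.ofReal_re,
        Complex.ofReal_im, Complex.ofReal_im, here, heim]
      ring
    rw [hre, him, hcos, hsin2, hudef]
    linear_combination (4*(1+k)^2*Real.sin k^2) * pyth
  have hB2 : ‖y - tilde x‖ = 2 * S := by
    apply habs
    have hre : (y - tilde x).re = (1-k) * Real.cos (2*k) - (1+k) := by
      rw [htilx, hydef, hxdef, Complex.sub_re, Complex.mul_re, Complex.ofReal_re,
        Complex.ofReal_im, Complex.ofReal_re, here, heim]
      ring
    have him : (y - tilde x).im = (1-k) * Real.sin (2*k) := by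
      rw [htilx, hydef, hxdef, Complex.sub_im, Complex.mul_im, Complex.ofReal_re,
        Complex.ofReal_im, Complex.ofReal_im, here, heim]
      ring
    rw [hre, him, hcos, hsin2, hudef]
    linear_combination (4*(1-k)^2*Real.sin k^2) * pyth
  have hw : wB x y = (2 * (1 - k) * Real.sin k) / (2 * S) := by
    rw [wB, if_neg hx0, if_neg hy0, hB1, hB2, min_self, ha]
  have hj : jB x y = (2 * (1 - k) * Real.sin k) / (2 * (1 - k) * Real.sin k + 2 * k) := by
    rw [jB, ha, hax, hay, min_self]
    norm_num
  rw [hw, hj]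
  have hane : (2 * (1 - k) * Real.sin k) ≠ 0 := by positivity
  field_simp


lemma sinc_tendsto : Filter.Tendsto (fun k : ℝ => Real.sin k / k)
    (nhdsWithin 0 (Set.Ioi 0)) (nhds 1) := by
  have h := Real.hasDerivAt_sin 0
  rw [Real.cos_zero] at h
  have h2 := hasDerivAt_iff_tendsto_slope.mp h
  have h3 : (fun k : ℝ => Real.sin k / k) = slope Real.sin 0 := by
    funext k
    rw [slope_def_field]
    simp
  rw [h3]
  exact h2.mono_left (nhdsWithin_mono 0 (fun x hx => ne_of_gt hx))


lemma part4 :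
    Filter.Tendsto (fun k : ℝ =>
        wB ((1 - k : ℝ) : ℂ) (((1 - k : ℝ) : ℂ) * Complex.exp ((2 * k : ℝ) * Complex.I)) /
          jB ((1 - k : ℝ) : ℂ) (((1 - k : ℝ) : ℂ) * Complex.exp ((2 * k : ℝ) * Complex.I)))
      (nhdsWithin 0 (Set.Ioi 0)) (nhds (Real.sqrt 2)) := by
  have hid : Filter.Tendsto (fun k : ℝ => k) (nhdsWithin 0 (Set.Ioi 0)) (nhds 0) :=
    Filter.tendsto_id.mono_right nhdsWithin_le_nhds
  have hu := sinc_tendsto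
  have h1 : Filter.Tendsto (fun k : ℝ => 1 - k) (nhdsWithin 0 (Set.Ioi 0)) (nhds 1) := by
    have h := (tendsto_const_nhds : Filter.Tendsto (fun _ : ℝ => (1:ℝ))
      (nhdsWithin 0 (Set.Ioi 0)) (nhds 1)).sub hid
    simpa using h
  have h1sq : Filter.Tendsto (fun k : ℝ => 1 - k^2) (nhdsWithin 0 (Set.Ioi 0)) (nhds 1) := by
    have h := (tendsto_const_nhds : Filter.Tendsto (fun _ : ℝ => (1:ℝ))
      (nhdsWithin 0 (Set.Ioi 0)) (nhds 1)).sub (hid.pow 2)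
    simpa using h
  have hnum : Filter.Tendsto (fun k : ℝ => (1-k) * (Real.sin k / k) + 1)
      (nhdsWithin 0 (Set.Ioi 0)) (nhds 2) := by
    have h := (h1.mul hu).add (tendsto_const_nhds : Filter.Tendsto (fun _ : ℝ => (1:ℝ))
      (nhdsWithin 0 (Set.Ioi 0)) (nhds 1))
    norm_num at h
    exact h
  have hden : Filter.Tendsto (fun k : ℝ => Real.sqrt (1 + (1-k^2) * (Real.sin k / k)^2))
      (nhdsWithin 0 (Set.Ioi 0)) (nhds (Real.sqrt 2)) := by
    have hinner : Filter.Tendsto (fun k : ℝ => 1 + (1-k^2) * (Real.sin k / k)^2)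
        (nhdsWithin 0 (Set.Ioi 0)) (nhds 2) := by
      have h := (tendsto_const_nhds : Filter.Tendsto (fun _ : ℝ => (1:ℝ))
        (nhdsWithin 0 (Set.Ioi 0)) (nhds 1)).add (h1sq.mul (hu.pow 2))
      norm_num at h
      exact h
    exact (Real.continuous_sqrt.continuousAt.tendsto).comp hinner
  have hsqrt2 : Real.sqrt 2 ≠ 0 := by positivity
  have hG : Filter.Tendsto (fun k : ℝ =>
      ((1-k) * (Real.sin k / k) + 1) / Real.sqrt (1 + (1-k^2) * (Real.sin k / k)^2))
      (nhdsWithin 0 (Set.Ioi 0)) (nhds (Real.sqrt 2)) := by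
    have h := hnum.div hden hsqrt2
    rwa [Real.div_sqrt] at h
  refine hG.congr' ?_
  filter_upwards [Ioo_mem_nhdsGT_of_mem (show (0:ℝ) ∈ Set.Ico 0 1 by norm_num)] with k hk
  obtain ⟨hk0, hk1⟩ := hk
  have hkne : k ≠ 0 := hk0.ne'
  rw [part3 k hk0 hk1]
  have hd : Real.sqrt (1 + (1-k^2) * (Real.sin k / k)^2)
      = Real.sqrt (k ^ 2 + (1 - k ^ 2) * Real.sin k ^ 2) / k := by
    rw [show 1 + (1-k^2) * (Real.sin k / k)^2
        = (k ^ 2 + (1 - k ^ 2) * Real.sin k ^ 2) / k^2 by field_simp,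
      Real.sqrt_div' _ (sq_nonneg k), Real.sqrt_sq hk0.le]
  have hn : (1-k) * (Real.sin k / k) + 1 = ((1 - k) * Real.sin k + k) / k := by
    field_simp
  rw [hd, hn]
  have hS0 : 0 < Real.sqrt (k ^ 2 + (1 - k ^ 2) * Real.sin k ^ 2) := by
    apply Real.sqrt_pos.2
    have h2 : 0 ≤ (1 - k^2) * Real.sin k ^ 2 := mul_nonneg (by nlinarith) (sq_nonneg _)
    nlinarith
  field_simp



lemma jB_nonneg (x y : ℂ) (hx : ‖x‖ < 1) (hy : ‖y‖ < 1) : 0 ≤ jB x y := by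
  apply div_nonneg (norm_nonneg _)
  have h : 0 ≤ min (1 - ‖x‖) (1 - ‖y‖) := le_min (by linarith) (by linarith)
  linarith [norm_nonneg (x - y)]

/-- For all `x, y ∈ B²`, `j* ≤ w ≤ √2 j*`, with equality `j* = w` on rays through the
origin; the constant `√2` is sharp: for `x = 1−k`, `y = (1−k)e^{2ki}`, the quotient
`w/j*` equals `((1−k)sin k + k)/√(k² + (1−k²)sin²k)` and tends to `√2` as `k → 0⁺`. -/
theorem j_le_w_le_sqrt_two_j :
    (∀ x y : ℂ, x ∈ Metric.ball (0 : ℂ) 1 → y ∈ Metric.ball (0 : ℂ) 1 →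
      jB x y ≤ wB x y ∧ wB x y ≤ Real.sqrt 2 * jB x y) ∧
    (∀ x y : ℂ, x ∈ Metric.ball (0 : ℂ) 1 → y ∈ Metric.ball (0 : ℂ) 1 →
      SameRay ℝ x y → jB x y = wB x y) ∧
    (∀ k : ℝ, 0 < k → k < 1 →
      wB ((1 - k : ℝ) : ℂ) (((1 - k : ℝ) : ℂ) * Complex.exp ((2 * k : ℝ) * Complex.I)) /
        jB ((1 - k : ℝ) : ℂ) (((1 - k : ℝ) : ℂ) * Complex.exp ((2 * k : ℝ) * Complex.I))
      = ((1 - k) * Real.sin k + k) / Real.sqrt (k ^ 2 + (1 - k ^ 2) * Real.sin k ^ 2)) ∧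
    Filter.Tendsto (fun k : ℝ =>
        wB ((1 - k : ℝ) : ℂ) (((1 - k : ℝ) : ℂ) * Complex.exp ((2 * k : ℝ) * Complex.I)) /
          jB ((1 - k : ℝ) : ℂ) (((1 - k : ℝ) : ℂ) * Complex.exp ((2 * k : ℝ) * Complex.I)))
      (nhdsWithin 0 (Set.Ioi 0)) (nhds (Real.sqrt 2)) := by
  have hsq : (1:ℝ) ≤ Real.sqrt 2 := by
    nlinarith [Real.sq_sqrt (by norm_num : (0:ℝ) ≤ 2), Real.sqrt_nonneg 2]
  refine ⟨?_, ?_, fun k hk0 hk1 => part3 k hk0 hk1, part4⟩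
  · intro x y hx hy
    rw [mem_ball, dist_zero_right] at hx hy
    by_cases hx0 : x = 0
    · subst hx0
      have he := jB_zero_left y hy
      have hj : 0 ≤ jB 0 y := jB_nonneg 0 y (by norm_num) hy
      exact ⟨le_of_eq he, by rw [← he]; nlinarith⟩
    · by_cases hy0 : y = 0
      · subst hy0
        have he := wB_zero_right x hx
        have hj : 0 ≤ jB x 0 := jB_nonneg x 0 hx (by norm_num)
        exact ⟨le_of_eq he, by rw [← he]; nlinarith⟩
      · exact part1_core x y hx hy hx0 hy0
  · intro x y hx hy hray
    rw [mem_ball, dist_zero_right] at hx hy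
    by_cases hx0 : x = 0
    · subst hx0; exact jB_zero_left y hy
    · by_cases hy0 : y = 0
      · subst hy0; exact wB_zero_right x hx
      · exact part2_core x y hx hy hx0 hy0 hray
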